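/- Let G = (V,E) be a finite simple graph and let S ⊆ V be a locating-dominating set of G. Then there is at most one vertex u ∈ V∖S with S ⊆ N(u); moreover, if such a vertex u exists, then S ∪ {u} is a locating-dominating set of the complement graph Ḡ. -/
import Mathlib


open SimpleGraph

/-- `S` is a dominating set of `G`: every vertex outside `S` has a neighbor in `S`. -/
def isDomSet {α : Type*} (G : SimpleGraph α) (S : Set α) : Prop :=
  ∀ v ∉ S, ∃ u ∈ S, G.Adj v u

/-- `S` is a locating-dominating set (LD-set) of `G`. -/
def isLDSet {α : Type*} (G : SimpleGraph α) (S : Set α) : Prop :=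
  isDomSet G S ∧ ∀ u ∉ S, ∀ v ∉ S, u ≠ v →
    G.neighborSet u ∩ S ≠ G.neighborSet v ∩ S

/-- The location-domination number `λ(G)`. -/
noncomputable def ldNum {α : Type*} (G : SimpleGraph α) : ℕ :=
  sInf {n | ∃ S : Set α, isLDSet G S ∧ S.ncard = n}

/-- The global location-domination number `λ_g(G)`. -/
noncomputable def gldNum {α : Type*} (G : SimpleGraph α) : ℕ :=
  sInf {n | ∃ S : Set α, isLDSet G S ∧ isLDSet Gᶜ S ∧ S.ncard = n}

/-- `G` is bipartite with stable sets `U` and `W`. -/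
def bipartiteWith {α : Type*} (G : SimpleGraph α) (U W : Set α) : Prop :=
  U ∪ W = Set.univ ∧ Disjoint U W ∧
    ∀ ⦃u v : α⦄, G.Adj u v → (u ∈ U ∧ v ∈ W) ∨ (u ∈ W ∧ v ∈ U)

theorem stmt1 {V : Type*} [Fintype V] (G : SimpleGraph V) (S : Set V)
    (hS : isLDSet G S) :
    (∀ u ∉ S, ∀ v ∉ S, S ⊆ G.neighborSet u → S ⊆ G.neighborSet v → u = v) ∧
    (∀ u ∉ S, S ⊆ G.neighborSet u → isLDSet Gᶜ (S ∪ {u})) := by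
  constructor
  · intro u hu v hv hSu hSv
    by_contra hne
    exact hS.2 u hu v hv hne (by
      rw [Set.inter_eq_right.mpr hSu, Set.inter_eq_right.mpr hSv])
  · intro u hu hSu
    constructor
    · intro v hv
      have hvS : v ∉ S := fun h => hv (Or.inl h)
      have hvu : v ≠ u := fun h => hv (Or.inr h)
      have : ¬ S ⊆ G.neighborSet v := by
        intro hSv
        apply hvu
        by_contra hne
        exact hS.2 v hvS u hu hne (by
          rw [Set.inter_eq_right.mpr hSv, Set.inter_eq_right.mpr hSu])
      obtain ⟨w, hwS, hwn⟩ := Set.not_subset.mp this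
      refine ⟨w, Or.inl hwS, ?_⟩
      rw [compl_adj]
      exact ⟨fun h => hvS (h ▸ hwS), fun h => hwn h⟩
    · intro x hx y hy hxy heq
      have hxS : x ∉ S := fun h => hx (Or.inl h)
      have hyS : y ∉ S := fun h => hy (Or.inl h)
      apply hS.2 x hxS y hyS hxy
      ext w
      simp only [Set.mem_inter_iff, mem_neighborSet]
      constructor
      · rintro ⟨hadj, hwS⟩
        refine ⟨?_, hwS⟩
        by_contra hny
        have hyw : y ≠ w := fun h => hyS (h ▸ hwS)
        have : w ∈ Gᶜ.neighborSet y ∩ (S ∪ {u}) :=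
          ⟨(compl_adj G y w).mpr ⟨hyw, hny⟩, Or.inl hwS⟩
        rw [← heq] at this
        exact this.1.2 hadj
      · rintro ⟨hadj, hwS⟩
        refine ⟨?_, hwS⟩
        by_contra hnx
        have hxw : x ≠ w := fun h => hxS (h ▸ hwS)
        have : w ∈ Gᶜ.neighborSet x ∩ (S ∪ {u}) :=
          ⟨(compl_adj G x w).mpr ⟨hxw, hnx⟩, Or.inl hwS⟩
        rw [heq] at this
        exact this.1.2 hadj
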